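/- Let k be odd and let ℤ act on H = ℤ² by the matrix a_k with rows (-1,k),(0,-1). Then the invariants H^ℤ = {v ∈ ℤ² : a_k v = v} are trivial, and the coinvariants H_ℤ = ℤ²/(a_k - I)(ℤ²) are isomorphic to ℤ/4. -/
import Mathlib

/-- For odd `k`, with `ℤ` acting on `H = ℤ²` by `a_k = !![-1,k;0,-1]`:
the invariants `H^ℤ = ker (a_k - 1)` are trivial and the coinvariants
`H_ℤ = ℤ²/(a_k - 1)(ℤ²)` are isomorphic to `ℤ/4`. -/
theorem stmt18 (k : ℤ) (hk : Odd k) :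
    (∀ v : Fin 2 → ℤ, (!![(-1 : ℤ), k; 0, -1]).mulVec v = v → v = 0) ∧
    Nonempty (((Fin 2 → ℤ) ⧸
      (LinearMap.range (Matrix.mulVecLin (!![(-1 : ℤ), k; 0, -1] - 1))).toAddSubgroup)
        ≃+ ZMod 4) := by
  obtain ⟨m, hm⟩ := hk
  have hM : (!![(-1 : ℤ), k; 0, -1] - 1) = !![-2, k; 0, -2] := by
    rw [Matrix.one_fin_two]
    ext i j
    fin_cases i <;> fin_cases j <;> simp
  constructor
  · intro v hv
    have h0 := congrFun hv 0
    have h1 := congrFun hv 1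
    simp [Matrix.mulVec, Matrix.vecHead, Matrix.vecTail, Fin.sum_univ_two] at h0 h1
    have hv1 : v 1 = 0 := by omega
    rw [hv1] at h0
    have hv0 : v 0 = 0 := by omega
    funext i
    fin_cases i <;> simp [hv0, hv1]
  · set f : (Fin 2 → ℤ) →+ ZMod 4 :=
      AddMonoidHom.mk' (fun v => ((2 * v 0 + k * v 1 : ℤ) : ZMod 4)) (by
        intro a b
        simp only [Pi.add_apply]
        push_cast
        ring) with hf
    have hk2 : ((k * k : ℤ) : ZMod 4) = 1 := by
      have h : ((k * k - 1 : ℤ) : ZMod 4) = 0 := by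
        rw [ZMod.intCast_zmod_eq_zero_iff_dvd]
        exact ⟨m * m + m, by subst hm; ring⟩
      push_cast at h
      push_cast
      linear_combination h
    have hsurj : Function.Surjective f := by
      intro c
      refine ⟨![0, k * c.val], ?_⟩
      show ((2 * ![(0 : ℤ), k * c.val] 0 + k * ![(0 : ℤ), k * c.val] 1 : ℤ) : ZMod 4) = c
      simp only [Matrix.cons_val_zero, Matrix.cons_val_one, Matrix.head_cons]
      rw [show (2 * 0 + k * (k * (c.val : ℤ)) : ℤ) = (k * k) * c.val by ring]
      push_cast [hk2]
      simp [ZMod.natCast_val, ZMod.cast_id]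
    have hker : (LinearMap.range (Matrix.mulVecLin (!![(-1 : ℤ), k; 0, -1] - 1))).toAddSubgroup
        = f.ker := by
      ext v
      simp only [Submodule.mem_toAddSubgroup, LinearMap.mem_range, AddMonoidHom.mem_ker,
        Matrix.mulVecLin_apply, hM]
      constructor
      · rintro ⟨w, rfl⟩
        show ((2 * _ + k * _ : ℤ) : ZMod 4) = 0
        rw [show (2 * ((!![(-2 : ℤ), k; 0, -2]).mulVec w) 0
            + k * ((!![(-2 : ℤ), k; 0, -2]).mulVec w) 1 : ℤ) = 4 * (- w 0) by
          simp [Matrix.mulVec, Matrix.vecHead, Matrix.vecTail, Fin.sum_univ_two]; ring]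
        rw [ZMod.intCast_zmod_eq_zero_iff_dvd]
        exact ⟨-w 0, rfl⟩
      · intro hv
        have hv' : ((2 * v 0 + k * v 1 : ℤ) : ZMod 4) = 0 := hv
        rw [ZMod.intCast_zmod_eq_zero_iff_dvd] at hv'
        obtain ⟨c, hc⟩ := hv'
        have hexp : k * v 1 = 2 * (m * v 1) + v 1 := by rw [hm]; ring
        have ht : v 1 = 2 * (2 * c - v 0 - m * v 1) := by
          push_cast at hc; linarith
        set t : ℤ := 2 * c - v 0 - m * v 1 with htdef
        have hkv : k * v 1 = 2 * (k * t) := by rw [ht]; ring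
        have hkm : k * t = 2 * (m * t) + t := by rw [hm]; ring
        have hmv : m * v 1 = 2 * (m * t) := by rw [ht]; ring
        refine ⟨![-c, -t], ?_⟩
        funext i
        fin_cases i <;>
          simp [Matrix.mulVec, Matrix.vecHead, Matrix.vecTail, Fin.sum_univ_two] <;>
          linarith [htdef, hkm, hmv, ht]
    exact ⟨(QuotientAddGroup.quotientAddEquivOfEq hker).trans
      (QuotientAddGroup.quotientKerEquivOfSurjective f hsurj)⟩
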